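/- Let w(z) := sech(πz/4) and h(z) := z·w(z). Then h ∈ L²(ℝ), h' ∈ L²(ℝ), h is not identically zero, and for every z ∈ ℝ one has h'(z) + (π/4)·tanh(πz/4)·h(z) + (π/4)·w(z)·∫_ℝ w'(s)·h(s) ds = 0. In particular 0 is an eigenvalue of the operator D₀. -/

import Mathlib

open Real MeasureTheory

/-- The weight `w(z) = sech(πz/4)`. -/
noncomputable def w (z : ℝ) : ℝ := 1 / Real.cosh (π * z / 4)

open Filter Asymptotics

lemma w_pos (z : ℝ) : 0 < w z := by
  unfold w
  positivity

lemma w_le_one (z : ℝ) : w z ≤ 1 := by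
  unfold w
  rw [div_le_one (Real.cosh_pos _)]
  exact Real.one_le_cosh _

lemma w_even (z : ℝ) : w (-z) = w z := by
  unfold w
  rw [show π * -z / 4 = -(π * z / 4) by ring, Real.cosh_neg]

lemma continuous_w : Continuous w := by
  unfold w
  exact continuous_const.div (Real.continuous_cosh.comp (by fun_prop))
    (fun x => (Real.cosh_pos _).ne')

lemma hasDerivAt_w (z : ℝ) :
    HasDerivAt w (-(π / 4) * Real.sinh (π * z / 4) / Real.cosh (π * z / 4) ^ 2) z := by
  have h1 : HasDerivAt (fun z : ℝ => π * z / 4) (π / 4) z := by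
    simpa using ((hasDerivAt_id z).const_mul π).div_const 4
  have h2 : HasDerivAt (fun z : ℝ => Real.cosh (π * z / 4))
      (Real.sinh (π * z / 4) * (π / 4)) z := (Real.hasDerivAt_cosh _).comp z h1
  have h3 := h2.inv (Real.cosh_pos _).ne'
  have hw : w = fun z => (Real.cosh (π * z / 4))⁻¹ := by
    funext z; simp [w, one_div]
  rw [hw]
  refine h3.congr_deriv ?_
  ring

lemma deriv_w (z : ℝ) :
    deriv w z = -(π / 4) * Real.sinh (π * z / 4) / Real.cosh (π * z / 4) ^ 2 :=
  (hasDerivAt_w z).deriv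

lemma continuous_deriv_w : Continuous (deriv w) := by
  have : deriv w = fun z => -(π / 4) * Real.sinh (π * z / 4) / Real.cosh (π * z / 4) ^ 2 := by
    funext z; exact deriv_w z
  rw [this]
  exact Continuous.div (by fun_prop) (by fun_prop) (fun x => pow_ne_zero 2 (Real.cosh_pos _).ne')

lemma abs_deriv_w_le (z : ℝ) : |deriv w z| ≤ w z := by
  rw [deriv_w]
  have hc := Real.cosh_pos (x := π * z / 4)
  have hs : |Real.sinh (π * z / 4)| ≤ Real.cosh (π * z / 4) := by
    rw [Real.abs_sinh, ← Real.cosh_abs]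
    exact (Real.sinh_lt_cosh _).le
  have hπ : π ≤ 4 := by linarith [Real.pi_lt_d2]
  rw [abs_div, abs_mul]
  rw [div_le_iff₀ (by positivity)]
  unfold w
  have h1 : |(-(π/4))| = π / 4 := by
    rw [abs_neg, abs_of_pos (by positivity)]
  rw [h1]
  have h2 : |Real.cosh (π * z / 4) ^ 2| = Real.cosh (π * z / 4) ^ 2 := abs_of_pos (by positivity)
  rw [h2]
  have : π / 4 * |Real.sinh (π * z / 4)| ≤ 1 * Real.cosh (π * z / 4) := by
    nlinarith [abs_nonneg (Real.sinh (π * z / 4))]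
  calc π / 4 * |Real.sinh (π * z / 4)| ≤ Real.cosh (π * z / 4) := by linarith
    _ = 1 / Real.cosh (π * z / 4) * Real.cosh (π * z / 4) ^ 2 := by field_simp

lemma w_le_exp (z : ℝ) : w z ≤ 2 * Real.exp (-(π * z / 4)) := by
  unfold w
  rw [div_le_iff₀ (Real.cosh_pos _), Real.cosh_eq]
  have h2 : Real.exp (-(π * z / 4)) * Real.exp (π * z / 4) = 1 := by
    rw [← Real.exp_add]; simp
  nlinarith [Real.exp_pos (π * z / 4), sq_nonneg (Real.exp (-(π * z / 4)))]

lemma polyw_isBigO_atTop :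
    (fun x : ℝ => (1 + x ^ 2) * w x ^ 2) =O[atTop] fun x => Real.exp (-x) := by
  have hne : ∀ᶠ x : ℝ in atTop, Real.exp (-x) = 0 → (1 + x ^ 2) * w x ^ 2 = 0 :=
    Eventually.of_forall fun x h => absurd h (Real.exp_ne_zero _)
  refine ((isLittleO_iff_tendsto' hne).mpr ?_).isBigO
  have hc : (0 : ℝ) < π / 2 - 1 := by nlinarith [Real.pi_gt_three]
  have hT : Tendsto (fun x : ℝ => 8 * (x ^ (2 : ℝ) * Real.exp (-(π / 2 - 1) * x)))
      atTop (nhds (8 * 0)) :=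
    (tendsto_rpow_mul_exp_neg_mul_atTop_nhds_zero 2 _ hc).const_mul 8
  rw [mul_zero] at hT
  refine squeeze_zero' ?_ ?_ hT
  · filter_upwards with x
    positivity
  · filter_upwards [eventually_ge_atTop (1 : ℝ)] with x hx
    have hx0 : (0 : ℝ) ≤ x := by linarith
    have h1 : (1 + x ^ 2) ≤ 2 * x ^ 2 := by nlinarith
    have h2 : w x ^ 2 ≤ (2 * Real.exp (-(π * x / 4))) ^ 2 :=
      pow_le_pow_left₀ (w_pos x).le (w_le_exp x) 2
    have h3 : (2 * Real.exp (-(π * x / 4))) ^ 2 = 4 * Real.exp (-(π / 2) * x) := by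
      rw [mul_pow, ← Real.exp_nat_mul]
      ring_nf
    have hrp : x ^ (2 : ℝ) = x ^ 2 := by
      rw [show (2:ℝ) = ((2:ℕ):ℝ) by norm_num, Real.rpow_natCast]
    rw [div_le_iff₀ (Real.exp_pos _), hrp]
    have hexp : Real.exp (-(π / 2) * x) * Real.exp x = Real.exp (-(π / 2 - 1) * x) := by
      rw [← Real.exp_add]; ring_nf
    have hw2 : (0 : ℝ) ≤ w x ^ 2 := by positivity
    have hE : (0 : ℝ) < Real.exp (-x) := Real.exp_pos _
    calc (1 + x ^ 2) * w x ^ 2 ≤ 2 * x ^ 2 * (4 * Real.exp (-(π / 2) * x)) := by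
            nlinarith [Real.exp_pos (-(π / 2) * x)]
      _ = 8 * (x ^ 2 * (Real.exp (-(π / 2) * x) * Real.exp x)) * Real.exp (-x) := by
            have h : Real.exp x * Real.exp (-x) = 1 := by rw [← Real.exp_add]; simp
            linear_combination (-8 * x ^ 2 * Real.exp (-(π / 2) * x)) * h
      _ = 8 * (x ^ 2 * Real.exp (-(π / 2 - 1) * x)) * Real.exp (-x) := by rw [hexp]

lemma integrable_polyw : Integrable (fun x : ℝ => (1 + x ^ 2) * w x ^ 2) := by
  have hcont : Continuous fun x : ℝ => (1 + x ^ 2) * w x ^ 2 := by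
    have := continuous_w
    fun_prop
  have hTop := polyw_isBigO_atTop
  have hBot : (fun x : ℝ => (1 + x ^ 2) * w x ^ 2) =O[atBot] Real.exp := by
    have := hTop.comp_tendsto tendsto_neg_atBot_atTop
    refine this.congr (fun x => ?_) (fun x => ?_)
    · simp [Function.comp, w_even, neg_neg]
    · simp [Function.comp]
  refine hcont.locallyIntegrable.integrable_of_isBigO_atBot_atTop hBot
    ⟨Set.Iic 0, Iic_mem_atBot 0, integrableOn_exp_Iic 0⟩ hTop
    ⟨Set.Ioi 0, Ioi_mem_atTop 0, ?_⟩
  have := exp_neg_integrableOn_Ioi 0 (b := 1) one_pos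
  simpa using this

lemma integrable_dominated {f : ℝ → ℝ} (hc : Continuous f) {C : ℝ}
    (hb : ∀ x, |f x| ≤ C * ((1 + x ^ 2) * w x ^ 2)) : Integrable f :=
  (integrable_polyw.const_mul C).mono' hc.aestronglyMeasurable
    (Eventually.of_forall fun x => by simpa [Real.norm_eq_abs] using hb x)

lemma tanh_eq' (x : ℝ) :
    Real.tanh x = (1 - Real.exp (-(2 * x))) / (1 + Real.exp (-(2 * x))) := by
  have hab : Real.exp x * Real.exp (-x) = 1 := by rw [← Real.exp_add]; simp
  have h2 : Real.exp (-(2 * x)) = Real.exp (-x) * Real.exp (-x) := by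
    rw [← Real.exp_add]; ring_nf
  rw [Real.tanh_eq_sinh_div_cosh, Real.sinh_eq, Real.cosh_eq, h2]
  rw [div_eq_div_iff (by positivity) (by positivity)]
  linear_combination Real.exp (-x) * hab

lemma tendsto_tanh_atTop : Tendsto Real.tanh atTop (nhds 1) := by
  have he : Tendsto (fun x : ℝ => Real.exp (-(2 * x))) atTop (nhds 0) := by
    have : Tendsto (fun x : ℝ => (2 : ℝ) * x) atTop atTop :=
      tendsto_id.const_mul_atTop two_pos
    exact Real.tendsto_exp_neg_atTop_nhds_zero.comp this
  have h := ((tendsto_const_nhds.sub he).div (tendsto_const_nhds.add he) (by norm_num) :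
    Tendsto (fun x : ℝ => (1 - Real.exp (-(2 * x))) / (1 + Real.exp (-(2 * x)))) atTop _)
  simp only [sub_zero, add_zero, div_one] at h
  exact h.congr fun x => (tanh_eq' x).symm

noncomputable def F (s : ℝ) : ℝ := s * w s ^ 2 / 2 - 2 / π * Real.tanh (π * s / 4)

lemma hasDerivAt_F (s : ℝ) : HasDerivAt F (deriv w s * (s * w s)) s := by
  have hu : HasDerivAt (fun s : ℝ => π * s / 4) (π / 4) s := by
    simpa using ((hasDerivAt_id s).const_mul π).div_const 4
  have hch := Real.cosh_pos (π * s / 4)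
  have h1 : HasDerivAt (fun s : ℝ => s * w s ^ 2 / 2)
      ((1 * w s ^ 2 + s * (2 * w s ^ 1 * (-(π / 4) * Real.sinh (π * s / 4) /
        Real.cosh (π * s / 4) ^ 2))) / 2) s :=
    ((hasDerivAt_id s).mul ((hasDerivAt_w s).pow 2)).div_const 2
  have hsh : HasDerivAt (fun s : ℝ => Real.sinh (π * s / 4))
      (Real.cosh (π * s / 4) * (π / 4)) s := (Real.hasDerivAt_sinh _).comp s hu
  have hcsh : HasDerivAt (fun s : ℝ => Real.cosh (π * s / 4))
      (Real.sinh (π * s / 4) * (π / 4)) s := (Real.hasDerivAt_cosh _).comp s hu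
  have h2 : HasDerivAt (fun s : ℝ => 2 / π * Real.tanh (π * s / 4))
      (2 / π * ((Real.cosh (π * s / 4) * (π / 4) * Real.cosh (π * s / 4) -
        Real.sinh (π * s / 4) * (Real.sinh (π * s / 4) * (π / 4))) /
        Real.cosh (π * s / 4) ^ 2)) s := by
    have := (hsh.div hcsh hch.ne').const_mul (2 / π)
    have e : (fun s : ℝ => 2 / π * Real.tanh (π * s / 4)) =
        fun s => 2 / π * (Real.sinh (π * s / 4) / Real.cosh (π * s / 4)) := by
      funext s; rw [Real.tanh_eq_sinh_div_cosh]
    rw [e]; exact this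
  have hF := h1.sub h2
  refine hF.congr_deriv ?_
  symm
  rw [deriv_w]
  have hsq : Real.cosh (π * s / 4) ^ 2 - Real.sinh (π * s / 4) ^ 2 = 1 :=
    Real.cosh_sq_sub_sinh_sq _
  have hπ : (π : ℝ) ≠ 0 := Real.pi_ne_zero
  unfold w
  field_simp
  linear_combination (4 * Real.cosh (π * s / 4)) * hsq

lemma integrable_integrand : Integrable (fun s : ℝ => deriv w s * (s * w s)) := by
  refine integrable_dominated (by exact (continuous_deriv_w.mul
    (continuous_id.mul continuous_w))) (C := 1) fun x => ?_
  have h1 := abs_deriv_w_le x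
  have h2 := w_pos x
  have h3 : |x| ≤ 1 + x ^ 2 := by nlinarith [abs_nonneg x, sq_abs x]
  rw [abs_mul, abs_mul]
  calc |deriv w x| * (|x| * |w x|) ≤ w x * (|x| * w x) := by
        rw [abs_of_pos h2]
        apply mul_le_mul_of_nonneg_right h1 (by positivity)
    _ ≤ (1 + x ^ 2) * w x ^ 2 := by nlinarith [abs_nonneg x]
    _ = 1 * ((1 + x ^ 2) * w x ^ 2) := by ring

lemma tendsto_sw2_atTop : Tendsto (fun s : ℝ => s * w s ^ 2 / 2) atTop (nhds 0) := by
  have hc : (0 : ℝ) < π / 2 - 1 := by nlinarith [Real.pi_gt_three]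
  have hT : Tendsto (fun x : ℝ => 2 * (x ^ (1 : ℝ) * Real.exp (-(π / 2) * x)))
      atTop (nhds (2 * 0)) :=
    (tendsto_rpow_mul_exp_neg_mul_atTop_nhds_zero 1 _ (by nlinarith [Real.pi_gt_three])).const_mul 2
  rw [mul_zero] at hT
  refine squeeze_zero' ?_ ?_ hT
  · filter_upwards [eventually_ge_atTop (0 : ℝ)] with x hx
    positivity
  · filter_upwards [eventually_ge_atTop (0 : ℝ)] with x hx
    have h2 : w x ^ 2 ≤ (2 * Real.exp (-(π * x / 4))) ^ 2 :=
      pow_le_pow_left₀ (w_pos x).le (w_le_exp x) 2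
    have h3 : (2 * Real.exp (-(π * x / 4))) ^ 2 = 4 * Real.exp (-(π / 2) * x) := by
      rw [mul_pow, ← Real.exp_nat_mul]; ring_nf
    have hrp : x ^ (1 : ℝ) = x := Real.rpow_one x
    rw [hrp]
    nlinarith [Real.exp_pos (-(π / 2) * x), w_pos x, sq_nonneg (w x)]

lemma tendsto_F_atTop : Tendsto F atTop (nhds (-(2 / π))) := by
  have h2 : Tendsto (fun s : ℝ => 2 / π * Real.tanh (π * s / 4)) atTop (nhds (2 / π * 1)) := by
    refine (tendsto_tanh_atTop.comp ?_).const_mul _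
    apply Tendsto.atTop_div_const (by norm_num)
    exact tendsto_id.const_mul_atTop Real.pi_pos
  have := tendsto_sw2_atTop.sub h2
  show Tendsto (fun s : ℝ => s * w s ^ 2 / 2 - 2 / π * Real.tanh (π * s / 4)) atTop _
  simpa using this

lemma F_odd (s : ℝ) : F (-s) = -F s := by
  unfold F
  rw [w_even, show π * -s / 4 = -(π * s / 4) by ring, Real.tanh_neg]
  ring

lemma tendsto_F_atBot : Tendsto F atBot (nhds (2 / π)) := by
  have h := tendsto_F_atTop.comp tendsto_neg_atBot_atTop
  have : (F ∘ fun x : ℝ => -x) = fun x => -F x := by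
    funext x; simp [Function.comp, F_odd]
  rw [this] at h
  have := h.neg
  simpa using this

lemma key_integral : ∫ s : ℝ, deriv w s * (s * w s) = -4 / π := by
  have := integral_of_hasDerivAt_of_tendsto hasDerivAt_F integrable_integrand
    tendsto_F_atBot tendsto_F_atTop
  rw [this]
  field_simp
  ring

lemma hasDerivAt_h (z : ℝ) :
    HasDerivAt (fun z : ℝ => z * w z) (w z + z * deriv w z) z := by
  have h := (hasDerivAt_id z).mul ((deriv_w z) ▸ hasDerivAt_w z)
  exact h.congr_deriv (by simp)

lemma hasDerivAt_hC (z : ℝ) :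
    HasDerivAt (fun z : ℝ => ((z * w z : ℝ) : ℂ)) ((w z + z * deriv w z : ℝ) : ℂ) z :=
  (hasDerivAt_h z).ofReal_comp

lemma deriv_hC (z : ℝ) :
    deriv (fun z : ℝ => ((z * w z : ℝ) : ℂ)) z = ((w z + z * deriv w z : ℝ) : ℂ) :=
  (hasDerivAt_hC z).deriv

/-- `0` is an eigenvalue of the operator
`D₀h = h' + (π/4)tanh(πz/4)h + (π/4)w⟨w',h⟩`, with eigenfunction
`h(z) = z·w(z)` belonging to `H¹(ℝ)`. -/
theorem zero_eigenvalue :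
    MemLp (fun z : ℝ => ((z * w z : ℝ) : ℂ)) 2 volume ∧
    MemLp (deriv (fun z : ℝ => ((z * w z : ℝ) : ℂ))) 2 volume ∧
    (∃ z : ℝ, ((z * w z : ℝ) : ℂ) ≠ 0) ∧
    ∀ z : ℝ, deriv (fun z : ℝ => ((z * w z : ℝ) : ℂ)) z
        + ((π / 4 * Real.tanh (π * z / 4) : ℝ) : ℂ) * ((z * w z : ℝ) : ℂ)
        + ((π / 4 * w z : ℝ) : ℂ) * ∫ s : ℝ, ((deriv w s : ℝ) : ℂ) * ((s * w s : ℝ) : ℂ)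
      = 0 := by
  have hcontC : Continuous fun z : ℝ => ((z * w z : ℝ) : ℂ) :=
    Complex.continuous_ofReal.comp (continuous_id.mul continuous_w)
  refine ⟨?_, ?_, ?_, ?_⟩
  · rw [memLp_two_iff_integrable_sq_norm hcontC.aestronglyMeasurable]
    refine integrable_dominated (f := fun x => ‖((x * w x : ℝ) : ℂ)‖ ^ 2)
      (by fun_prop) (C := 1) fun x => ?_
    show |‖((x * w x : ℝ) : ℂ)‖ ^ 2| ≤ _
    rw [Complex.norm_real, Real.norm_eq_abs, abs_of_nonneg (sq_nonneg _), sq_abs]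
    have := w_pos x
    nlinarith [sq_nonneg (w x), sq_nonneg x, sq_nonneg (x * w x)]
  · have hde : deriv (fun z : ℝ => ((z * w z : ℝ) : ℂ)) =
        fun z : ℝ => ((w z + z * deriv w z : ℝ) : ℂ) := funext deriv_hC
    rw [hde]
    have hcont2 : Continuous fun z : ℝ => ((w z + z * deriv w z : ℝ) : ℂ) :=
      Complex.continuous_ofReal.comp (continuous_w.add (continuous_id.mul continuous_deriv_w))
    rw [memLp_two_iff_integrable_sq_norm hcont2.aestronglyMeasurable]
    refine integrable_dominated (f := fun x => ‖((w x + x * deriv w x : ℝ) : ℂ)‖ ^ 2)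
      (by fun_prop) (C := 2) fun x => ?_
    show |‖((w x + x * deriv w x : ℝ) : ℂ)‖ ^ 2| ≤ _
    rw [Complex.norm_real, Real.norm_eq_abs, abs_of_nonneg (sq_nonneg _), sq_abs]
    have h1 := abs_deriv_w_le x
    have h2 := (w_pos x).le
    have h3 : deriv w x ^ 2 ≤ w x ^ 2 := by
      nlinarith [abs_nonneg (deriv w x), sq_abs (deriv w x)]
    nlinarith [sq_nonneg (w x - x * deriv w x), sq_nonneg (w x + x * deriv w x),
      sq_nonneg (x * w x - x * deriv w x), sq_nonneg (x * w x + x * deriv w x),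
      sq_nonneg x, mul_nonneg (sq_nonneg x) (sub_nonneg.mpr h3)]
  · refine ⟨1, ?_⟩
    rw [ne_eq, Complex.ofReal_eq_zero]
    have := w_pos 1
    nlinarith
  · intro z
    have hI : (∫ s : ℝ, ((deriv w s : ℝ) : ℂ) * ((s * w s : ℝ) : ℂ))
        = ((-4 / π : ℝ) : ℂ) := by
      have : (fun s : ℝ => ((deriv w s : ℝ) : ℂ) * ((s * w s : ℝ) : ℂ))
          = fun s : ℝ => ((deriv w s * (s * w s) : ℝ) : ℂ) := by
        funext s; push_cast; ring
      rw [this]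
      have h2 : (∫ s : ℝ, ((deriv w s * (s * w s) : ℝ) : ℂ))
          = ((∫ s : ℝ, deriv w s * (s * w s) : ℝ) : ℂ) := integral_ofReal
      rw [h2, key_integral]
    rw [deriv_hC z, hI, ← Complex.ofReal_mul, ← Complex.ofReal_mul, ← Complex.ofReal_add,
      ← Complex.ofReal_add, Complex.ofReal_eq_zero]
    rw [deriv_w, Real.tanh_eq_sinh_div_cosh]
    have hch := Real.cosh_pos (π * z / 4)
    have hπ : (π : ℝ) ≠ 0 := Real.pi_ne_zero
    unfold w
    field_simp
    ring
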